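/- arXiv:1107.0857 — 3 statements merged into one kernel-verified Lean document; each statement's English description precedes it below -/
import Mathlib

section
/- Let V be a ℚ-vector space, t a positive integer, and N a natural number. Suppose Q : (ℤ≥0)^t → V is a function such that for every index i and every choice of fixed values of the other t−1 variables, the resulting single-variable function n ↦ Q(..., n, ...) agrees with a polynomial function of degree at most N with coefficients in V. Then Q itself agrees with a polynomial function in t variables with coefficients in V. -/
open Finset Polynomial

/-- The Lagrange basis polynomials at nodes `0, 1, ..., N` over `ℚ`. -/
private noncomputable def LB (N : ℕ) (k : ℕ) : Polynomial ℚ :=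
  Lagrange.basis (Finset.range (N + 1)) (fun m : ℕ => (m : ℚ)) k

private lemma LB_inj (N : ℕ) :
    Set.InjOn (fun m : ℕ => (m : ℚ)) (Finset.range (N + 1)) :=
  fun _ _ _ _ hh => Nat.cast_injective hh

/-- Lagrange interpolation identity for monomials of degree at most `N`. -/
private lemma lemA (N j : ℕ) (hj : j ≤ N) (q : ℚ) :
    q ^ j = ∑ k ∈ Finset.range (N + 1), (LB N k).eval q * (k : ℚ) ^ j := by
  have hd : (Polynomial.X ^ j : Polynomial ℚ).degree < (Finset.range (N + 1)).card := by
    rw [Polynomial.degree_X_pow, Finset.card_range]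
    exact_mod_cast Nat.lt_succ_of_le hj
  have h1 := Lagrange.eq_interpolate (LB_inj N) hd
  have h2 := congrArg (Polynomial.eval q) h1
  simp only [Lagrange.interpolate_apply, Polynomial.eval_pow, Polynomial.eval_X,
    Polynomial.eval_finset_sum, Polynomial.eval_mul, Polynomial.eval_C] at h2
  rw [h2]
  exact Finset.sum_congr rfl fun k _ => mul_comm _ _

/-- A single-variable function agreeing with a polynomial of degree ≤ N is determined
by its values at `0, ..., N` via the Lagrange basis. -/
private lemma lemB {V : Type*} [AddCommGroup V] [Module ℚ V] (N : ℕ)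
    (f : ℕ → V) (v : Fin (N + 1) → V)
    (hf : ∀ n : ℕ, f n = ∑ j : Fin (N + 1), ((n : ℚ) ^ (j : ℕ)) • v j) (n : ℕ) :
    f n = ∑ k ∈ Finset.range (N + 1), (LB N k).eval (n : ℚ) • f k := by
  calc f n = ∑ j : Fin (N + 1), ((n : ℚ) ^ (j : ℕ)) • v j := hf n
    _ = ∑ j : Fin (N + 1),
        (∑ k ∈ Finset.range (N + 1), (LB N k).eval (n : ℚ) * (k : ℚ) ^ (j : ℕ)) • v j := by
        refine Finset.sum_congr rfl fun j _ => ?_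
        rw [← lemA N j (Nat.lt_succ_iff.mp j.isLt) (n : ℚ)]
    _ = ∑ k ∈ Finset.range (N + 1), (LB N k).eval (n : ℚ) •
          ∑ j : Fin (N + 1), ((k : ℚ) ^ (j : ℕ)) • v j := by
        simp_rw [Finset.sum_smul, Finset.smul_sum, mul_smul]
        exact Finset.sum_comm
    _ = ∑ k ∈ Finset.range (N + 1), (LB N k).eval (n : ℚ) • f k := by
        exact Finset.sum_congr rfl fun k _ => by rw [hf k]

/-- If `Q : (ℤ≥0)^t → V` agrees, in each variable separately, with a polynomial of
degree at most `N` with coefficients in the `ℚ`-vector space `V`, then `Q` agrees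
with a polynomial function in `t` variables with coefficients in `V`. -/
theorem stmt_0 (V : Type*) [AddCommGroup V] [Module ℚ V]
    (t : ℕ) (ht : 0 < t) (N : ℕ) (Q : (Fin t → ℕ) → V)
    (h : ∀ (i : Fin t) (x : Fin t → ℕ), ∃ v : Fin (N + 1) → V,
      ∀ n : ℕ, Q (Function.update x i n) = ∑ j : Fin (N + 1), ((n : ℚ) ^ (j : ℕ)) • v j) :
    ∃ (s : Finset (Fin t → ℕ)) (c : (Fin t → ℕ) → V),
      ∀ x : Fin t → ℕ, Q x = ∑ α ∈ s, (∏ i : Fin t, (x i : ℚ) ^ α i) • c α := by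
  classical
  set s₀ := Finset.range (N + 1) with hs₀
  -- expansion of Q in a single variable via the Lagrange basis values
  have key : ∀ (i : Fin t) (x : Fin t → ℕ),
      Q x = ∑ m ∈ s₀, (LB N m).eval ((x i : ℚ)) • Q (Function.update x i m) := by
    intro i x
    obtain ⟨v, hv⟩ := h i x
    have hb := lemB N (fun n => Q (Function.update x i n)) v hv (x i)
    simpa only [Function.update_eq_self] using hb
  -- membership description for the intermediate index sets
  have memA : ∀ (j : ℕ) (x k : Fin t → ℕ),
      k ∈ Fintype.piFinset (fun i : Fin t => if (i : ℕ) < j then s₀ else {x i}) ↔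
      ∀ i : Fin t, if (i : ℕ) < j then k i ∈ s₀ else k i = x i := by
    intro j x k
    rw [Fintype.mem_piFinset]
    refine forall_congr' fun i => ?_
    by_cases hlt : (i : ℕ) < j <;> simp [hlt]
  -- main induction: expand in the first j variables
  have main : ∀ j : ℕ, j ≤ t → ∀ x : Fin t → ℕ,
      Q x = ∑ k ∈ Fintype.piFinset (fun i : Fin t => if (i : ℕ) < j then s₀ else {x i}),
        (∏ i : Fin t, if (i : ℕ) < j then (LB N (k i)).eval (x i : ℚ) else 1) • Q k := by
    intro j
    induction j with
    | zero =>
      intro _ x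
      have hset : Fintype.piFinset (fun i : Fin t => if (i : ℕ) < 0 then s₀ else {x i})
          = {x} := by
        ext y
        simp [Fintype.mem_piFinset, funext_iff]
      simp [hset]
    | succ j ih =>
      intro hjt x
      have hj : j < t := hjt
      set i₀ : Fin t := ⟨j, hj⟩ with hi₀
      rw [ih (le_of_lt hj) x]
      have hstep : ∀ k ∈ Fintype.piFinset (fun i : Fin t => if (i : ℕ) < j then s₀ else {x i}),
          Q k = ∑ m ∈ s₀, (LB N m).eval (x i₀ : ℚ) • Q (Function.update k i₀ m) := by
        intro k hk
        have hki : k i₀ = x i₀ := by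
          have := (memA j x k).mp hk i₀
          simpa [hi₀] using this
        rw [← hki]
        exact key i₀ k
      have hprod : ∀ (k : Fin t → ℕ) (m : ℕ),
          (∏ i : Fin t, if (i : ℕ) < j + 1 then
              (LB N ((Function.update k i₀ m) i)).eval (x i : ℚ) else 1)
          = (∏ i : Fin t, if (i : ℕ) < j then (LB N (k i)).eval (x i : ℚ) else 1)
            * (LB N m).eval (x i₀ : ℚ) := by
        intro k m
        rw [Fintype.prod_eq_mul_prod_compl i₀, Fintype.prod_eq_mul_prod_compl i₀
          (fun i : Fin t => if (i : ℕ) < j then (LB N (k i)).eval (x i : ℚ) else 1)]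
        have h1 : (if ((i₀ : ℕ)) < j + 1 then
            (LB N ((Function.update k i₀ m) i₀)).eval (x i₀ : ℚ) else 1)
            = (LB N m).eval (x i₀ : ℚ) := by
          simp [hi₀]
        have h2 : (if ((i₀ : ℕ)) < j then (LB N (k i₀)).eval (x i₀ : ℚ) else 1) = 1 := by
          simp [hi₀]
        have h3 : (∏ i ∈ ({i₀}ᶜ : Finset (Fin t)), if (i : ℕ) < j + 1 then
              (LB N ((Function.update k i₀ m) i)).eval (x i : ℚ) else 1)
            = ∏ i ∈ ({i₀}ᶜ : Finset (Fin t)),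
              if (i : ℕ) < j then (LB N (k i)).eval (x i : ℚ) else 1 := by
          refine Finset.prod_congr rfl fun i hi => ?_
          have hne : i ≠ i₀ := by simpa using hi
          have hv : (i : ℕ) ≠ j := fun hh => hne (Fin.ext (by simp [hi₀, hh]))
          have hiff : ((i : ℕ) < j + 1) ↔ ((i : ℕ) < j) := by omega
          rw [Function.update_of_ne hne, if_congr hiff rfl rfl]
        rw [h1, h2, h3]
        ring
      calc ∑ k ∈ Fintype.piFinset (fun i : Fin t => if (i : ℕ) < j then s₀ else {x i}),
            (∏ i : Fin t, if (i : ℕ) < j then (LB N (k i)).eval (x i : ℚ) else 1) • Q k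
          = ∑ k ∈ Fintype.piFinset (fun i : Fin t => if (i : ℕ) < j then s₀ else {x i}),
            ∑ m ∈ s₀, ((∏ i : Fin t, if (i : ℕ) < j then (LB N (k i)).eval (x i : ℚ) else 1)
              * (LB N m).eval (x i₀ : ℚ)) • Q (Function.update k i₀ m) := by
            refine Finset.sum_congr rfl fun k hk => ?_
            rw [hstep k hk, Finset.smul_sum]
            simp_rw [smul_smul]
        _ = ∑ k ∈ Fintype.piFinset (fun i : Fin t => if (i : ℕ) < j + 1 then s₀ else {x i}),
            (∏ i : Fin t, if (i : ℕ) < j + 1 then (LB N (k i)).eval (x i : ℚ) else 1) • Q k := by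
            rw [← Finset.sum_product']
            refine Finset.sum_bij' (fun p _ => Function.update p.1 i₀ p.2)
              (fun k' _ => (Function.update k' i₀ (x i₀), k' i₀)) ?_ ?_ ?_ ?_ ?_
            · rintro ⟨k, m⟩ hp
              obtain ⟨hk, hm⟩ := Finset.mem_product.mp hp
              dsimp only
              rw [memA]
              intro i
              by_cases hii : i = i₀
              · subst hii
                simpa [hi₀] using hm
              · have hv : (i : ℕ) ≠ j := fun hh => hii (Fin.ext (by simp [hi₀, hh]))
                have hk' := (memA j x k).mp hk i
                rw [Function.update_of_ne hii]
                by_cases hlt : (i : ℕ) < j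
                · have hlt' : (i : ℕ) < j + 1 := by omega
                  rw [if_pos hlt']
                  rw [if_pos hlt] at hk'
                  exact hk'
                · have hlt' : ¬ (i : ℕ) < j + 1 := by omega
                  rw [if_neg hlt']
                  rw [if_neg hlt] at hk'
                  exact hk'
            · intro k' hk'
              rw [Finset.mem_product]
              constructor
              · rw [memA]
                intro i
                dsimp only
                by_cases hii : i = i₀
                · subst hii
                  have : ¬ ((i₀ : ℕ) < j) := by simp [hi₀]
                  rw [if_neg this, Function.update_self]
                · have hv : (i : ℕ) ≠ j := fun hh => hii (Fin.ext (by simp [hi₀, hh]))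
                  have hmem := (memA (j + 1) x k').mp hk' i
                  rw [Function.update_of_ne hii]
                  by_cases hlt : (i : ℕ) < j
                  · have hlt' : (i : ℕ) < j + 1 := by omega
                    rw [if_pos hlt]
                    rw [if_pos hlt'] at hmem
                    exact hmem
                  · have hlt' : ¬ (i : ℕ) < j + 1 := by omega
                    rw [if_neg hlt]
                    rw [if_neg hlt'] at hmem
                    exact hmem
              · dsimp only
                have hmem := (memA (j + 1) x k').mp hk' i₀
                have : ((i₀ : ℕ)) < j + 1 := by simp [hi₀]
                rw [if_pos this] at hmem
                exact hmem
            · rintro ⟨k, m⟩ hp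
              obtain ⟨hk, hm⟩ := Finset.mem_product.mp hp
              have hki : k i₀ = x i₀ := by
                have := (memA j x k).mp hk i₀
                simpa [hi₀] using this
              simp only [Function.update_self, Function.update_idem]
              rw [← hki, Function.update_eq_self]
            · intro k' hk'
              simp only [Function.update_idem]
              rw [Function.update_eq_self]
            · rintro ⟨k, m⟩ hp
              rw [hprod k m]
        _ = _ := rfl
  -- the full expansion over all variables
  have final : ∀ x : Fin t → ℕ, Q x = ∑ k ∈ Fintype.piFinset (fun _ : Fin t => s₀),
      (∏ i : Fin t, (LB N (k i)).eval (x i : ℚ)) • Q k := by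
    intro x
    have hm := main t le_rfl x
    have hset : (fun i : Fin t => if (i : ℕ) < t then s₀ else {x i})
        = fun _ : Fin t => s₀ := by
      funext i
      rw [if_pos i.isLt]
    rw [hset] at hm
    simpa only [Fin.is_lt, if_true] using hm
  refine ⟨Fintype.piFinset (fun _ : Fin t => s₀),
    fun α => ∑ k ∈ Fintype.piFinset (fun _ : Fin t => s₀),
      (∏ i : Fin t, (LB N (k i)).coeff (α i)) • Q k, ?_⟩
  intro x
  rw [final x]
  have hc : ∀ k : Fin t → ℕ, k ∈ Fintype.piFinset (fun _ : Fin t => s₀) →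
      (∏ i : Fin t, (LB N (k i)).eval (x i : ℚ))
      = ∑ α ∈ Fintype.piFinset (fun _ : Fin t => s₀),
          ∏ i : Fin t, (LB N (k i)).coeff (α i) * (x i : ℚ) ^ (α i) := by
    intro k hk
    rw [← Finset.prod_univ_sum (fun _ : Fin t => s₀)
      (fun (i : Fin t) (c : ℕ) => (LB N (k i)).coeff c * (x i : ℚ) ^ c)]
    refine Finset.prod_congr rfl fun i _ => ?_
    have hki : k i ∈ s₀ := Fintype.mem_piFinset.mp hk i
    have hdeg : (LB N (k i)).natDegree < N + 1 := by
      have := Lagrange.natDegree_basis (LB_inj N) (by simpa [hs₀] using hki)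
      rw [Finset.card_range] at this
      rw [LB, this]
      omega
    exact Polynomial.eval_eq_sum_range' hdeg _
  calc ∑ k ∈ Fintype.piFinset (fun _ : Fin t => s₀),
        (∏ i : Fin t, (LB N (k i)).eval (x i : ℚ)) • Q k
      = ∑ k ∈ Fintype.piFinset (fun _ : Fin t => s₀),
        ∑ α ∈ Fintype.piFinset (fun _ : Fin t => s₀),
          ((∏ i : Fin t, (x i : ℚ) ^ (α i)) * ∏ i : Fin t, (LB N (k i)).coeff (α i)) • Q k := by
        refine Finset.sum_congr rfl fun k hk => ?_
        rw [hc k hk, Finset.sum_smul]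
        refine Finset.sum_congr rfl fun α _ => ?_
        rw [Finset.prod_mul_distrib]
        ring_nf
    _ = ∑ α ∈ Fintype.piFinset (fun _ : Fin t => s₀),
        (∏ i : Fin t, (x i : ℚ) ^ (α i)) •
          ∑ k ∈ Fintype.piFinset (fun _ : Fin t => s₀),
            (∏ i : Fin t, (LB N (k i)).coeff (α i)) • Q k := by
        rw [Finset.sum_comm]
        refine Finset.sum_congr rfl fun α _ => ?_
        rw [Finset.smul_sum]
        refine Finset.sum_congr rfl fun k _ => ?_
        rw [mul_smul]
    _ = _ := rfl
end

section
/- For all integers 1 ≤ l ≤ d, the coefficient of x^d in τ(x)^l, where τ(x) = Σ_{r≥1} (r^{r-1}/r!) x^r, equals (l!/d!) · C(d-1, l-1) · d^{d-l}. Equivalently, Σ over partitions ν of d of length l of (l!/|Aut(ν)|) · ∏_{i=1}^l ν_i^{ν_i - 1}/ν_i! = (l!/d!) · C(d-1, l-1) · d^{d-l}. -/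
open Finset Polynomial
open scoped fwdDiff

lemma fwdDiff_eval (p : Polynomial ℚ) :
    Δ_[(1:ℚ)] (fun x : ℚ => p.eval x) = fun x : ℚ => (p.comp (X + C 1) - p).eval x := by
  funext x
  simp [fwdDiff, eval_comp, add_comm]

lemma degree_comp_sub_lt (p : Polynomial ℚ) (hp : p ≠ 0) :
    (p.comp (X + C 1) - p).degree < p.degree := by
  have hnd : (p.comp (X + C 1)).natDegree = p.natDegree := by
    rw [natDegree_comp, natDegree_X_add_C, mul_one]
  have hlc : (p.comp (X + C 1)).leadingCoeff = p.leadingCoeff := by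
    by_cases h0 : p.natDegree = 0
    · obtain ⟨c, rfl⟩ := natDegree_eq_zero.mp h0
      simp
    · rw [leadingCoeff_comp (by rw [natDegree_X_add_C]; norm_num), leadingCoeff_X_add_C,
        one_pow, mul_one]
  have hcomp0 : p.comp (X + C 1) ≠ 0 := by
    intro h
    apply hp
    have := hlc
    rw [h, leadingCoeff_zero] at this
    exact leadingCoeff_eq_zero.mp this.symm
  by_cases h : p.comp (X + C 1) - p = 0
  · rw [h, degree_zero]
    exact Ne.bot_lt (fun hb => hp (degree_eq_bot.mp hb))
  · have hdeg : (p.comp (X + C 1)).degree = p.degree := by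
      rw [degree_eq_natDegree hcomp0, degree_eq_natDegree hp, hnd]
    have := degree_sub_lt hdeg hcomp0 hlc
    rwa [hdeg] at this

lemma fwdDiff_iter_poly : ∀ (n : ℕ) (p : Polynomial ℚ), p.degree < n →
    (fwdDiff (1:ℚ))^[n] (fun x : ℚ => p.eval x) = fun _ => 0 := by
  intro n
  induction n with
  | zero =>
    intro p hp
    have : p = 0 := by
      by_contra h
      exact absurd (zero_le_degree_iff.mpr h) (not_le.mpr (by simpa using hp))
    subst this
    simp [Function.iterate_zero]
  | succ n ih =>
    intro p hp
    rw [Function.iterate_succ_apply, fwdDiff_eval]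
    apply ih
    rcases eq_or_ne p 0 with rfl | h0
    · rw [zero_comp, sub_zero, degree_zero]
      exact bot_lt_iff_ne_bot.mpr (by simp)
    · have h1 : p.natDegree < n + 1 := (natDegree_lt_iff_degree_lt h0).mpr hp
      have h2 : p.degree ≤ (n : ℕ) :=
        le_trans degree_le_natDegree (by exact_mod_cast Nat.lt_succ_iff.mp h1)
      exact lt_of_lt_of_le (degree_comp_sub_lt p h0) h2

open Finset Polynomial
open scoped fwdDiff

lemma alt_sum_eval (n : ℕ) (p : Polynomial ℚ) (h : p.degree < n) :
    ∑ k ∈ range (n+1), ((-1:ℚ)^(n-k) * (n.choose k : ℚ)) * p.eval (k : ℚ) = 0 := by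
  have key := fwdDiff_iter_eq_sum_shift (h := (1:ℚ)) (fun x : ℚ => p.eval x) n 0
  rw [fwdDiff_iter_poly n p h] at key
  have : (0:ℚ) = ∑ k ∈ range (n+1), ((-1:ℤ)^(n-k) * (n.choose k : ℤ)) • p.eval ((0:ℚ) + k • (1:ℚ)) := key
  rw [this]
  apply Finset.sum_congr rfl
  intro k _
  rw [zsmul_eq_mul]
  push_cast
  ring_nf
lemma poly_eq_of_deriv_eq {p q : ℚ[X]} (hd : derivative p = derivative q) {a : ℚ}
    (he : p.eval a = q.eval a) : p = q := by
  have h0 : derivative (p - q) = 0 := by rw [derivative_sub, hd, sub_self]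
  have hc := eq_C_of_derivative_eq_zero h0
  have h2 : (p - q).eval a = 0 := by rw [eval_sub, he, sub_self]
  rw [hc, eval_C] at h2
  have : p - q = 0 := by rw [hc, h2, map_zero]
  linear_combination (norm := ring_nf) this

lemma smul_helper (a b : ℚ) (x : ℚ[X]) : a • (C b * x * 1) = (a * b) • x := by
  rw [mul_one, smul_eq_C_mul, smul_eq_C_mul, C_mul]; ring

lemma choose_cast_fact (n k : ℕ) (hk : k ≤ n) :
    (((n+1).choose k : ℚ)) * (((n+1-k : ℕ)) : ℚ) = ((n+1 : ℕ) : ℚ) * (n.choose k : ℚ) := by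
  have h : (n+1).choose k * (n+1-k) = (n+1) * n.choose k := by
    rw [← Nat.choose_succ_right_eq, Nat.add_one_mul_choose_eq]
  exact_mod_cast congrArg (fun m : ℕ => (m : ℚ)) h

lemma abel_poly : ∀ n : ℕ, 1 ≤ n → ∀ c : ℚ,
    (∑ k ∈ Icc 1 n, ((n.choose k : ℚ) * (k:ℚ)^(k-1)) • (X + C (c + ((n-k : ℕ) : ℚ)))^(n-k))
      = (n : ℚ) • (X + C (c + (n:ℚ)))^(n-1) := by
  intro n hn
  induction n, hn using Nat.le_induction with
  | base =>
    intro c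
    simp [Finset.Icc_self]
  | succ n hn ih =>
    intro c
    have hcast : ∀ k ∈ Icc 1 n, c + (((n+1-k : ℕ)) : ℚ) = (c+1) + (((n-k : ℕ)) : ℚ) := by
      intro k hk
      simp only [mem_Icc] at hk
      rw [Nat.cast_sub (by omega), Nat.cast_sub (by omega)]
      push_cast; ring
    apply poly_eq_of_deriv_eq (a := -(c + ((n:ℚ)+1)))
    · -- derivatives agree
      rw [derivative_sum, Finset.sum_Icc_succ_top (by omega)]
      have hz : derivative ((((n+1).choose (n+1) : ℚ) * ((n+1:ℕ):ℚ)^(n+1-1)) •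
          (X + C (c + (((n+1-(n+1) : ℕ)) : ℚ)))^(n+1-(n+1))) = 0 := by
        simp
      rw [hz, add_zero]
      have hstep : ∀ k ∈ Icc 1 n,
          derivative ((((n+1).choose k : ℚ) * (k:ℚ)^(k-1)) • (X + C (c + (((n+1-k : ℕ)) : ℚ)))^(n+1-k))
          = ((n+1 : ℕ) : ℚ) • (((n.choose k : ℚ) * (k:ℚ)^(k-1)) • (X + C ((c+1) + (((n-k : ℕ)) : ℚ)))^(n-k)) := by
        intro k hk
        have hk' := Finset.mem_Icc.mp hk
        rw [derivative_smul, derivative_pow, derivative_X_add_C, hcast k hk,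
          show n+1-k-1 = n-k by omega, smul_helper, smul_smul]
        congr 1
        linear_combination ((k:ℚ) ^ (k-1)) * choose_cast_fact n k hk'.2
      rw [Finset.sum_congr rfl hstep, ← Finset.smul_sum, ih (c+1), smul_smul,
        derivative_smul, derivative_pow, derivative_X_add_C, Nat.add_sub_cancel, smul_helper,
        show c + ((n+1:ℕ):ℚ) = (c+1) + (n:ℚ) by push_cast; ring]
    · -- evaluation at -(c+n+1)
      rw [eval_finset_sum]
      have hev : ∀ k ∈ Icc 1 (n+1),
          eval (-(c + ((n:ℚ)+1))) ((((n+1).choose k : ℚ) * (k:ℚ)^(k-1)) • (X + C (c + (((n+1-k : ℕ)) : ℚ)))^(n+1-k))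
          = ((-1:ℚ)^(n+1-k) * (((n+1).choose k : ℚ))) * ((k:ℚ))^n := by
        intro k hk
        have hk' := Finset.mem_Icc.mp hk
        rw [eval_smul, eval_pow, eval_add, eval_X, eval_C, smul_eq_mul]
        have h1 : -(c + ((n:ℚ)+1)) + (c + ((n+1-k:ℕ):ℚ)) = -(k:ℚ) := by
          rw [Nat.cast_sub (by omega)]; push_cast; ring
        rw [h1, neg_pow]
        have h2 : (k:ℚ)^(k-1) * ((k:ℚ)^(1+n-k)) = (k:ℚ)^n := by
          rw [← pow_add]
          congr 1
          omega
        ring_nf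
        linear_combination ((((1+n).choose k : ℕ) : ℚ) * (-1:ℚ)^(1+n-k)) * h2
      rw [Finset.sum_congr rfl hev]
      have hins : range (n+2) = insert 0 (Icc 1 (n+1)) := by
        ext x; simp [Finset.mem_range, Finset.mem_Icc]; omega
      have halt := alt_sum_eval (n+1) (X^n) (by rw [degree_X_pow]; exact_mod_cast Nat.lt_succ_self n)
      rw [hins, Finset.sum_insert (by simp)] at halt
      simp only [eval_pow, eval_X] at halt
      have h0 : ((-1:ℚ)^(n+1-0) * (((n+1).choose 0 : ℕ) : ℚ)) * ((0:ℕ):ℚ)^n = 0 := by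
        rw [Nat.cast_zero, zero_pow (show n ≠ 0 by omega)]; ring
      rw [h0, zero_add] at halt
      rw [halt]
      rw [eval_smul, eval_pow, eval_add, eval_X, eval_C, smul_eq_mul]
      rw [show -(c + ((n:ℚ)+1)) + (c + ((n+1:ℕ):ℚ)) = 0 by push_cast; ring]
      rw [zero_pow (by omega)]
      ring
noncomputable def aF (r : ℕ) : ℚ := if r = 0 then 0 else (r:ℚ)^(r-1) / r.factorial

lemma abel_sum (n : ℕ) (hn : 1 ≤ n) :
    ∑ k ∈ Icc 1 n, (n.choose k : ℚ) * (k:ℚ)^(k-1) * (((n-k:ℕ)):ℚ)^(n-k) = (n:ℚ)^n := by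
  have h := congrArg (Polynomial.eval (0:ℚ)) (abel_poly n hn 0)
  rw [eval_finset_sum] at h
  simp only [eval_smul, eval_pow, eval_add, eval_X, eval_C, smul_eq_mul, zero_add] at h
  exact h.trans (by rw [← pow_succ']; congr 1; omega)

lemma conv_identity (d : ℕ) (hd : 1 ≤ d) :
    ∑ k ∈ range d, aF k * (((d-k:ℕ)):ℚ) * aF (d-k)
      = ((d:ℚ) - 1) * (d:ℚ)^(d-1) / d.factorial := by
  have hins : range d = insert 0 (Icc 1 (d-1)) := by ext x; simp [Finset.mem_range, Finset.mem_Icc]; omega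
  rw [hins, Finset.sum_insert (by simp)]
  rw [show aF 0 = 0 from if_pos rfl, zero_mul, zero_mul, zero_add]
  have key : ∀ k ∈ Icc 1 (d-1), aF k * (((d-k:ℕ)):ℚ) * aF (d-k)
      = ((d.choose k : ℚ) * (k:ℚ)^(k-1) * (((d-k:ℕ)):ℚ)^(d-k)) / d.factorial := by
    intro k hk
    obtain ⟨h1, h2⟩ := Finset.mem_Icc.mp hk
    rw [aF, aF, if_neg (by omega), if_neg (by omega)]
    have hfac : ((d.choose k : ℚ)) * (k.factorial:ℚ) * ((d-k).factorial:ℚ) = (d.factorial : ℚ) := by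
      exact_mod_cast congrArg (fun m : ℕ => (m:ℚ)) (Nat.choose_mul_factorial_mul_factorial (show k ≤ d by omega))
    have h3 : (((d-k:ℕ)):ℚ) * (((d-k:ℕ)):ℚ)^(d-k-1) = (((d-k:ℕ)):ℚ)^(d-k) := by
      rw [← pow_succ']
      congr 1; omega
    have hk0 : (k.factorial : ℚ) ≠ 0 := Nat.cast_ne_zero.mpr (Nat.factorial_ne_zero k)
    have hdk0 : ((d-k).factorial : ℚ) ≠ 0 := Nat.cast_ne_zero.mpr (Nat.factorial_ne_zero _)
    have hc0 : ((d.choose k : ℕ) : ℚ) ≠ 0 :=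
      Nat.cast_ne_zero.mpr (Nat.choose_pos (show k ≤ d by omega)).ne'
    rw [div_mul_eq_mul_div, div_mul_div_comm, ← h3, ← hfac]
    rw [div_eq_div_iff (mul_ne_zero hk0 hdk0)
      (mul_ne_zero (mul_ne_zero hc0 hk0) hdk0)]
    ring
  rw [Finset.sum_congr rfl key, ← Finset.sum_div]
  have habel := abel_sum d hd
  have hsplit : Icc 1 d = insert d (Icc 1 (d-1)) := by ext x; simp [Finset.mem_Icc]; omega
  rw [hsplit, Finset.sum_insert (by simp [Finset.mem_Icc]; omega)] at habel
  rw [Nat.choose_self, Nat.sub_self] at habel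
  simp only [Nat.cast_one, Nat.cast_zero, one_mul, pow_zero, mul_one] at habel
  have hsum : ∑ k ∈ Icc 1 (d-1), (d.choose k : ℚ) * (k:ℚ)^(k-1) * (((d-k:ℕ)):ℚ)^(d-k)
      = (d:ℚ)^d - (d:ℚ)^(d-1) := by linarith
  rw [hsum]
  congr 1
  have hdd : (d:ℚ)^d = (d:ℚ) * (d:ℚ)^(d-1) := by rw [← pow_succ']; congr 1; omega
  rw [hdd]; ring
open PowerSeries in
lemma coeff_X_mul_D (ψ : PowerSeries ℚ) (d : ℕ) :
    PowerSeries.coeff d (PowerSeries.X * d⁄dX ℚ ψ) = (d:ℚ) * PowerSeries.coeff d ψ := by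
  cases d with
  | zero => rw [PowerSeries.coeff_zero_X_mul]; simp
  | succ n => rw [PowerSeries.coeff_succ_X_mul, PowerSeries.coeff_derivative]; push_cast; ring

open PowerSeries in
lemma tau_ode (τ : PowerSeries ℚ) (hτ : ∀ r, PowerSeries.coeff r τ = aF r) :
    PowerSeries.X * d⁄dX ℚ τ - PowerSeries.X * (τ * d⁄dX ℚ τ) = τ := by
  ext n
  rw [map_sub, coeff_X_mul_D]
  cases n with
  | zero =>
    rw [PowerSeries.coeff_zero_X_mul, hτ 0]
    simp [aF]
  | succ n =>
    rw [PowerSeries.coeff_succ_X_mul, PowerSeries.coeff_mul,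
      Finset.Nat.sum_antidiagonal_eq_sum_range_succ_mk]
    have hterm : ∀ k ∈ range (n+1),
        PowerSeries.coeff k τ * PowerSeries.coeff (n-k) (d⁄dX ℚ τ)
          = aF k * (((n+1-k:ℕ)):ℚ) * aF (n+1-k) := by
      intro k hk
      have hk' := Finset.mem_range.mp hk
      rw [PowerSeries.coeff_derivative, hτ, hτ, show n-k+1 = n+1-k by omega,
        show ((n+1-k:ℕ):ℚ) = ((n-k:ℕ):ℚ)+1 by rw [show n+1-k = n-k+1 by omega]; push_cast; ring]
      ring
    rw [Finset.sum_congr rfl hterm, conv_identity (n+1) (by omega), hτ]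
    rw [show aF (n+1) = ((n+1:ℕ):ℚ)^n / (n+1).factorial from by
      rw [aF, if_neg (by omega), Nat.add_sub_cancel]]
    push_cast
    ring

open PowerSeries in
lemma tau_pow_rec (τ : PowerSeries ℚ) (hτ : ∀ r, PowerSeries.coeff r τ = aF r)
    (l d : ℕ) (hl : 1 ≤ l) :
    ((l:ℚ)+1) * ((d:ℚ) * PowerSeries.coeff d (τ^l))
      - (l:ℚ) * ((d:ℚ) * PowerSeries.coeff d (τ^(l+1)))
      = (l:ℚ) * ((l:ℚ)+1) * PowerSeries.coeff d (τ^l) := by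
  have hD : ∀ m : ℕ, d⁄dX ℚ (τ^(m+1)) = (m+1) • (τ^m * d⁄dX ℚ τ) := by
    intro m
    rw [Derivation.leibniz_pow, Nat.add_sub_cancel, smul_eq_mul]
  have h1 : ∀ m : ℕ, (((m+1:ℕ)):ℚ) * PowerSeries.coeff d (PowerSeries.X * (τ^m * d⁄dX ℚ τ))
      = (d:ℚ) * PowerSeries.coeff d (τ^(m+1)) := by
    intro m
    have h2 : PowerSeries.coeff d (PowerSeries.X * d⁄dX ℚ (τ^(m+1)))
        = (((m+1:ℕ)):ℚ) * PowerSeries.coeff d (PowerSeries.X * (τ^m * d⁄dX ℚ τ)) := by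
      rw [hD m, mul_smul_comm, map_nsmul, nsmul_eq_mul]
    rw [← h2, coeff_X_mul_D]
  have hp : τ^l = τ^(l-1) * τ := by rw [← pow_succ]; congr 1; omega
  have hbase : PowerSeries.X * (τ^(l-1) * d⁄dX ℚ τ) - PowerSeries.X * (τ^l * d⁄dX ℚ τ) = τ^l := by
    calc PowerSeries.X * (τ^(l-1) * d⁄dX ℚ τ) - PowerSeries.X * (τ^l * d⁄dX ℚ τ)
        = τ^(l-1) * (PowerSeries.X * d⁄dX ℚ τ - PowerSeries.X * (τ * d⁄dX ℚ τ)) := by rw [hp]; ring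
      _ = τ^(l-1) * τ := by rw [tau_ode τ hτ]
      _ = τ^l := hp.symm
  have hC : PowerSeries.coeff d (PowerSeries.X * (τ^(l-1) * d⁄dX ℚ τ))
      - PowerSeries.coeff d (PowerSeries.X * (τ^l * d⁄dX ℚ τ)) = PowerSeries.coeff d (τ^l) := by
    rw [← map_sub, hbase]
  have hA := h1 (l-1)
  rw [show l-1+1 = l from by omega] at hA
  have hB := h1 l
  push_cast at hA hB
  linear_combination (-((l:ℚ)+1))*hA + (l:ℚ)*hB + (l:ℚ)*((l:ℚ)+1)*hC
lemma coeff_tau_pow (τ : PowerSeries ℚ) (hτ : ∀ r, PowerSeries.coeff r τ = aF r)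
    (d : ℕ) (hd1 : 1 ≤ d) :
    ∀ l : ℕ, 1 ≤ l → l ≤ d →
      PowerSeries.coeff d (τ^l)
        = (l.factorial : ℚ) / (d.factorial : ℚ) * (((d-1).choose (l-1) : ℕ) : ℚ) * (d:ℚ)^(d-l) := by
  intro l hl
  induction l, hl using Nat.le_induction with
  | base =>
    intro _
    rw [pow_one, hτ d, aF, if_neg (by omega)]
    norm_num
    ring
  | succ l hl ih =>
    intro hld
    have ihv := ih (by omega)
    have hrec := tau_pow_rec τ hτ l d hl
    have hl0 : (0:ℚ) < (l:ℚ) := by exact_mod_cast hl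
    have hd0 : (0:ℚ) < (d:ℚ) := by exact_mod_cast hd1
    have hld' : (l:ℚ) * (d:ℚ) ≠ 0 := by positivity
    apply mul_left_cancel₀ hld'
    have h2 : (l:ℚ)*(d:ℚ)*(PowerSeries.coeff d (τ^(l+1)))
        = ((l:ℚ)+1)*((d:ℚ)-(l:ℚ))*(PowerSeries.coeff d (τ^l)) := by
      linear_combination (-1 : ℚ) * hrec
    rw [h2, ihv]
    have hCnat : (d-1).choose l * l = (d-1).choose (l-1) * (d-l) := by
      have h := Nat.choose_succ_right_eq (d-1) (l-1)
      rw [show l-1+1 = l by omega, show d-1-(l-1) = d-l by omega] at h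
      exact h
    have hC : (((d-1).choose l : ℕ) : ℚ) * (l:ℚ) = (((d-1).choose (l-1) : ℕ) : ℚ) * ((d:ℚ) - (l:ℚ)) := by
      qify [show l ≤ d by omega] at hCnat
      exact_mod_cast hCnat
    rw [Nat.add_sub_cancel, show d-l = (d-(l+1))+1 by omega, pow_succ, Nat.factorial_succ]
    push_cast
    linear_combination (-(((l.factorial:ℚ)/(d.factorial:ℚ)) * (d:ℚ)^(d-(l+1)) * (d:ℚ) * ((l:ℚ)+1))) * hC
lemma prod_count_erase {α : Type*} [DecidableEq α] (s : Multiset α) (j : α) (hj : j ∈ s) :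
    ∏ i ∈ s.toFinset, (s.count i).factorial
      = s.count j * ∏ i ∈ (s.erase j).toFinset, ((s.erase j).count i).factorial := by
  have h1 : ∏ i ∈ (s.erase j).toFinset, ((s.erase j).count i).factorial
      = ∏ i ∈ s.toFinset, ((s.erase j).count i).factorial := by
    apply Finset.prod_subset
    · intro x hx
      rw [Multiset.mem_toFinset] at hx ⊢
      exact Multiset.mem_of_mem_erase hx
    · intro x _ hnx
      have hx0 : (s.erase j).count x = 0 := by
        rw [Multiset.count_eq_zero]
        intro hmem
        exact hnx (Multiset.mem_toFinset.mpr hmem)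
      rw [hx0]
      rfl
  rw [h1]
  have hjF : j ∈ s.toFinset := Multiset.mem_toFinset.mpr hj
  rw [← Finset.prod_erase_mul _ _ hjF, ← Finset.prod_erase_mul _ _ hjF]
  have h2 : ∀ x ∈ s.toFinset.erase j, ((s.erase j).count x).factorial = (s.count x).factorial := by
    intro x hx
    rw [Multiset.count_erase_of_ne (Finset.ne_of_mem_erase hx)]
  rw [Finset.prod_congr rfl h2, Multiset.count_erase_self]
  have hc1 : 1 ≤ s.count j := Multiset.one_le_count_iff_mem.mpr hj
  rw [show (s.count j).factorial = s.count j * (s.count j - 1).factorial from by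
    conv_lhs => rw [show s.count j = (s.count j - 1)+1 by omega]
    rw [Nat.factorial_succ, show s.count j - 1 + 1 = s.count j by omega]]
  ring

/-- The finset of `l`-tuples whose multiset of values is `s`. -/
def tupFinset {α : Type*} [DecidableEq α] (l : ℕ) (s : Multiset α) : Finset (Fin l → α) :=
  (Fintype.piFinset (fun _ : Fin l => s.toFinset)).filter
    (fun f => Multiset.map f Finset.univ.val = s)

lemma mem_tupFinset {α : Type*} [DecidableEq α] {l : ℕ} {s : Multiset α} {f : Fin l → α} :
    f ∈ tupFinset l s ↔ Multiset.map f Finset.univ.val = s := by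
  rw [tupFinset, Finset.mem_filter, Fintype.mem_piFinset]
  constructor
  · exact fun h => h.2
  · intro h
    refine ⟨fun i => ?_, h⟩
    rw [Multiset.mem_toFinset, ← h]
    exact Multiset.mem_map_of_mem f (Finset.mem_univ_val i)

lemma count_tuples {α : Type*} [DecidableEq α] :
    ∀ (l : ℕ) (s : Multiset α), Multiset.card s = l →
    (tupFinset l s).card * ∏ j ∈ s.toFinset, (s.count j).factorial = l.factorial := by
  intro l
  induction l with
  | zero =>
    intro s hs
    rw [Multiset.card_eq_zero] at hs
    subst hs
    have : tupFinset 0 (0 : Multiset α) = {(fun i : Fin 0 => i.elim0)} := by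
      ext f
      rw [mem_tupFinset]
      simp only [Finset.mem_singleton]
      constructor
      · intro _; funext i; exact i.elim0
      · intro _; simp
    rw [this]
    simp
  | succ l ih =>
    intro s hs
    have hmap : ∀ f : Fin (l+1) → α, Multiset.map f Finset.univ.val
        = f 0 ::ₘ Multiset.map (fun i : Fin l => f i.succ) Finset.univ.val := by
      intro f
      rw [Fin.univ_succ, Finset.cons_val, Multiset.map_cons, Finset.map_val, Multiset.map_map]
      rfl
    have hcard : (tupFinset (l+1) s).card
        = ∑ j ∈ s.toFinset, (tupFinset l (s.erase j)).card := by
      rw [Finset.card_eq_sum_card_fiberwise (f := fun f : Fin (l+1) → α => f 0)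
        (t := s.toFinset) (fun f hf => by
          rw [Finset.mem_coe, mem_tupFinset] at hf
          rw [Finset.mem_coe, Multiset.mem_toFinset, ← hf, hmap f]
          exact Multiset.mem_cons_self _ _)]
      apply Finset.sum_congr rfl
      intro j hj
      rw [Multiset.mem_toFinset] at hj
      apply Finset.card_bij (fun f _ => fun i : Fin l => f i.succ)
      · intro f hf
        rw [Finset.mem_filter, mem_tupFinset] at hf
        obtain ⟨hf1, hf2⟩ := hf
        rw [mem_tupFinset]
        have hm := hmap f
        rw [hf2] at hm
        rw [← hf1, hm, Multiset.erase_cons_head]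
      · intro f hf g hg hfg
        rw [Finset.mem_filter] at hf hg
        funext i
        refine Fin.cases ?_ ?_ i
        · rw [hf.2, hg.2]
        · intro k
          exact congrFun hfg k
      · intro f' hf'
        rw [mem_tupFinset] at hf'
        refine ⟨Fin.cons (α := fun _ => α) j f', ?_, ?_⟩
        · rw [Finset.mem_filter, mem_tupFinset]
          constructor
          · rw [hmap (Fin.cons (α := fun _ => α) j f')]
            have hcs : (fun i : Fin l => Fin.cons (α := fun _ => α) j f' i.succ) = f' := by
              funext i; exact Fin.cons_succ (α := fun _ => α) j f' i
            rw [hcs, Fin.cons_zero (α := fun _ => α), hf', Multiset.cons_erase hj]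
          · exact Fin.cons_zero (α := fun _ => α) j f'
        · funext i
          exact (Fin.cons_succ (α := fun _ => α) j f' i).symm
    rw [hcard, Finset.sum_mul]
    have hterm : ∀ j ∈ s.toFinset,
        (tupFinset l (s.erase j)).card * ∏ i ∈ s.toFinset, (s.count i).factorial
        = s.count j * l.factorial := by
      intro j hj
      rw [Multiset.mem_toFinset] at hj
      rw [prod_count_erase s j hj]
      have hihe := ih (s.erase j) (by rw [Multiset.card_erase_of_mem hj, hs]; rfl)
      calc (tupFinset l (s.erase j)).card
          * (s.count j * ∏ i ∈ (s.erase j).toFinset, ((s.erase j).count i).factorial)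
          = s.count j * ((tupFinset l (s.erase j)).card
            * ∏ i ∈ (s.erase j).toFinset, ((s.erase j).count i).factorial) := by ring
        _ = s.count j * l.factorial := by rw [hihe]
    rw [Finset.sum_congr rfl hterm, ← Finset.sum_mul, Multiset.toFinset_sum_count_eq, hs,
      Nat.factorial_succ]
lemma map_range_val {β : Type*} (h : ℕ → β) (l : ℕ) :
    Multiset.map (fun i : Fin l => h i.val) Finset.univ.val = Multiset.map h (Finset.range l).val := by
  rw [show (Finset.range l) = (Finset.univ : Finset (Fin l)).map Fin.valEmbedding from by
    rw [Fin.map_valEmbedding_univ, Nat.Iio_eq_range]]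
  rw [Finset.map_val, Multiset.map_map]
  rfl

lemma sum_partitions (τ : PowerSeries ℚ) (hτ : ∀ r, PowerSeries.coeff r τ = aF r)
    (d l : ℕ) :
    ∑ ν ∈ Finset.univ.filter (fun ν : d.Partition => Multiset.card ν.parts = l),
        ((l.factorial : ℚ) / ((∏ j ∈ ν.parts.toFinset, (ν.parts.count j).factorial : ℕ) : ℚ)) *
          (ν.parts.map (fun r : ℕ => (r : ℚ) ^ (r - 1) / (r.factorial : ℚ))).prod
      = PowerSeries.coeff d (τ ^ l) := by
  classical
  set W : (ℕ →₀ ℕ) → ℚ := fun g => ∏ i ∈ range l, aF (g i) with hWdef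
  set S : Finset (ℕ →₀ ℕ) :=
    (Finset.finsuppAntidiag (range l) d).filter (fun g => ∀ i ∈ range l, g i ≠ 0) with hSdef
  set filt : Finset (d.Partition) :=
    Finset.univ.filter (fun ν : d.Partition => Multiset.card ν.parts = l) with hfiltdef
  set wt : d.Partition → ℚ :=
    fun ν => (ν.parts.map (fun r : ℕ => (r : ℚ) ^ (r - 1) / (r.factorial : ℚ))).prod with hwtdef
  set pf : (ℕ →₀ ℕ) → d.Partition := fun g =>
    if h : ((range l).val.map g).sum = d ∧ (∀ x ∈ (range l).val.map g, 0 < x)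
    then ⟨(range l).val.map g, fun {x} hx => h.2 x hx, h.1⟩
    else ⟨Multiset.replicate d 1,
      fun {x} hx => by rw [Multiset.eq_of_mem_replicate hx]; norm_num, by simp⟩ with hpfdef
  have hPg : ∀ g ∈ S, (pf g).parts = (range l).val.map g := by
    intro g hg
    rw [hSdef, Finset.mem_filter, Finset.mem_finsuppAntidiag] at hg
    obtain ⟨⟨hsum, _⟩, hpos⟩ := hg
    have hcond : ((range l).val.map g).sum = d ∧ (∀ x ∈ (range l).val.map g, 0 < x) := by
      constructor
      · exact hsum
      · intro x hx
        obtain ⟨i, hi, rfl⟩ := Multiset.mem_map.mp hx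
        exact Nat.pos_of_ne_zero (hpos i hi)
    rw [hpfdef]
    simp only [dif_pos hcond]
  have hmaps : ∀ g ∈ S, pf g ∈ filt := by
    intro g hg
    rw [hfiltdef, Finset.mem_filter]
    refine ⟨Finset.mem_univ _, ?_⟩
    rw [hPg g hg, Multiset.card_map]
    exact Finset.card_range l
  have hfib : ∀ ν ∈ filt, ((S.filter (fun g => pf g = ν)).card : ℚ)
      = (l.factorial : ℚ) / ((∏ j ∈ ν.parts.toFinset, (ν.parts.count j).factorial : ℕ) : ℚ) := by
    intro ν hν
    have hνl : Multiset.card ν.parts = l := (Finset.mem_filter.mp hν).2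
    have hcard : (S.filter (fun g => pf g = ν)).card = (tupFinset l ν.parts).card := by
      apply Finset.card_bij (fun g _ => fun i : Fin l => g i.val)
      · intro g hg
        rw [mem_tupFinset]
        rw [Finset.mem_filter] at hg
        have hparts : ν.parts = (range l).val.map g := by rw [← hg.2, hPg g hg.1]
        rw [hparts, map_range_val]
      · intro g hg g' hg' hfg
        rw [Finset.mem_filter] at hg hg'
        have hg1 := hg.1
        have hg'1 := hg'.1
        rw [hSdef, Finset.mem_filter, Finset.mem_finsuppAntidiag] at hg1 hg'1
        ext i
        by_cases hi : i < l
        · exact congrFun hfg ⟨i, hi⟩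
        · have h1 : g i = 0 := by
            by_contra h
            have := hg1.1.2 (Finsupp.mem_support_iff.mpr h)
            rw [Finset.mem_range] at this
            omega
          have h2 : g' i = 0 := by
            by_contra h
            have := hg'1.1.2 (Finsupp.mem_support_iff.mpr h)
            rw [Finset.mem_range] at this
            omega
          rw [h1, h2]
      · intro f hf
        rw [mem_tupFinset] at hf
        refine ⟨Finsupp.onFinset (range l) (fun i => if h : i < l then f ⟨i, h⟩ else 0)
          (fun i hi => by
            rw [Finset.mem_range]
            by_contra h
            exact hi (by simp [h])), ?_, ?_⟩
        rotate_right
        · funext i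
          simp only [Finsupp.onFinset_apply]
          rw [dif_pos i.isLt]
        set g : ℕ →₀ ℕ := Finsupp.onFinset (range l) (fun i => if h : i < l then f ⟨i, h⟩ else 0)
          (fun i hi => by
            rw [Finset.mem_range]
            by_contra h
            exact hi (by simp [h])) with hgdef
        have hgval : ∀ i : Fin l, g i.val = f i := by
          intro i
          rw [hgdef]
          simp only [Finsupp.onFinset_apply]
          rw [dif_pos i.isLt]
        have hgmap : (range l).val.map g = ν.parts := by
          rw [← hf, ← map_range_val g l]
          apply Multiset.map_congr rfl
          intro i _
          exact hgval i
        have hgS : g ∈ S := by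
          rw [hSdef, Finset.mem_filter, Finset.mem_finsuppAntidiag]
          refine ⟨⟨?_, Finsupp.support_onFinset_subset⟩, ?_⟩
          · show ((range l).val.map g).sum = d
            rw [hgmap]
            exact ν.parts_sum
          · intro i hi
            rw [Finset.mem_range] at hi
            have : g i = f ⟨i, hi⟩ := by
              rw [hgdef]
              simp only [Finsupp.onFinset_apply]
              rw [dif_pos hi]
            rw [this]
            have hmem : f ⟨i, hi⟩ ∈ ν.parts := by
              rw [← hf]
              exact Multiset.mem_map_of_mem f (Finset.mem_univ_val _)
            exact (ν.parts_pos hmem).ne'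
        have hgpf : pf g = ν := by
          apply Nat.Partition.ext
          rw [hPg g hgS, hgmap]
        exact Finset.mem_filter.mpr ⟨hgS, hgpf⟩
    have hcnt := count_tuples l ν.parts hνl
    have hprodpos : 0 < ∏ j ∈ ν.parts.toFinset, (ν.parts.count j).factorial :=
      Finset.prod_pos (fun _ _ => Nat.factorial_pos _)
    have hne : ((∏ j ∈ ν.parts.toFinset, (ν.parts.count j).factorial : ℕ) : ℚ) ≠ 0 :=
      Nat.cast_ne_zero.mpr hprodpos.ne'
    rw [eq_div_iff hne, hcard]
    exact_mod_cast hcnt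
  have e4 : ∀ ν ∈ filt, ∑ g ∈ S.filter (fun g => pf g = ν), W g
      = ((S.filter (fun g => pf g = ν)).card : ℚ) * wt ν := by
    intro ν hν
    have hconst : ∀ g ∈ S.filter (fun g => pf g = ν), W g = wt ν := by
      intro g hg
      rw [Finset.mem_filter] at hg
      have hparts : ν.parts = (range l).val.map g := by rw [← hg.2, hPg g hg.1]
      have hSg := hg.1
      rw [hSdef, Finset.mem_filter] at hSg
      have hprod : W g = ∏ i ∈ range l, ((g i : ℚ)^(g i - 1)/((g i).factorial : ℚ)) := by
        rw [hWdef]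
        exact Finset.prod_congr rfl (fun i hi => by rw [aF, if_neg (hSg.2 i hi)])
      rw [hprod, hwtdef]
      dsimp only
      rw [hparts, Multiset.map_map, Finset.prod_eq_multiset_prod]
      rfl
    rw [Finset.sum_congr rfl hconst, Finset.sum_const, nsmul_eq_mul]
  calc ∑ ν ∈ filt, ((l.factorial : ℚ) /
          ((∏ j ∈ ν.parts.toFinset, (ν.parts.count j).factorial : ℕ) : ℚ)) * wt ν
      = ∑ ν ∈ filt, ((S.filter (fun g => pf g = ν)).card : ℚ) * wt ν :=
        Finset.sum_congr rfl (fun ν hν => by rw [hfib ν hν])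
    _ = ∑ ν ∈ filt, ∑ g ∈ S.filter (fun g => pf g = ν), W g :=
        Finset.sum_congr rfl (fun ν hν => (e4 ν hν).symm)
    _ = ∑ g ∈ S, W g := Finset.sum_fiberwise_of_maps_to hmaps W
    _ = ∑ g ∈ Finset.finsuppAntidiag (range l) d, W g := by
        apply Finset.sum_filter_of_ne
        intro g _ hgne i hi hgi
        apply hgne
        rw [hWdef]
        dsimp only
        apply Finset.prod_eq_zero hi
        rw [hgi]
        simp [aF]
    _ = PowerSeries.coeff d (τ ^ l) := by
        rw [PowerSeries.coeff_pow]
        exact Finset.sum_congr rfl (fun g _ =>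
          Finset.prod_congr rfl (fun i _ => (hτ (g i)).symm))

/-- For `1 ≤ l ≤ d`, the `x^d` coefficient of `τ^l` (with `τ` the tree function)
is `(l!/d!)·C(d-1,l-1)·d^{d-l}`; equivalently, the corresponding sum over
partitions of `d` of length `l` equals the same quantity. -/
theorem stmt_6 (d l : ℕ) (hl : 1 ≤ l) (hd : l ≤ d)
    (τ : PowerSeries ℚ)
    (hτ : ∀ r : ℕ, PowerSeries.coeff r τ =
      if r = 0 then 0 else (r : ℚ) ^ (r - 1) / r.factorial) :
    PowerSeries.coeff d (τ ^ l) =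
      ((l.factorial : ℚ) / (d.factorial : ℚ)) * (((d - 1).choose (l - 1) : ℕ) : ℚ) *
        (d : ℚ) ^ (d - l)
    ∧ ∑ ν ∈ Finset.univ.filter (fun ν : d.Partition => ν.parts.card = l),
        ((l.factorial : ℚ) / ((∏ j ∈ ν.parts.toFinset, (ν.parts.count j).factorial : ℕ) : ℚ)) *
          (ν.parts.map (fun r : ℕ => (r : ℚ) ^ (r - 1) / (r.factorial : ℚ))).prod =
      ((l.factorial : ℚ) / (d.factorial : ℚ)) * (((d - 1).choose (l - 1) : ℕ) : ℚ) *
        (d : ℚ) ^ (d - l) := by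
  have hτ' : ∀ r, PowerSeries.coeff r τ = aF r := fun r => by rw [hτ r, aF]
  have h1 := coeff_tau_pow τ hτ' d (le_trans hl hd) l hl hd
  exact ⟨h1, by rw [sum_partitions τ hτ' d l]; exact h1⟩
end

section
/- Let d be a positive integer and let f : ℕ × ℕ → ℚ be any function. Then the following reindexing identity holds: Σ over partitions ν of d, over distinguished parts (i.e., over 1 ≤ e ≤ d counted with the multiplicity m_e(ν) of e in ν) of (1/|Aut(ν)|) · e^2 · (∏_{i=1}^{l(ν)} ν_i^{ν_i-1}/ν_i!) · f(l(ν), e) equals Σ_{e=1}^{d} (e^{e+1}/e!) · Σ over partitions μ of d−e of (1/|Aut(μ)|) · (∏_{i=1}^{l(μ)} μ_i^{μ_i-1}/μ_i!) · f(l(μ)+1, e), where the empty partition of 0 contributes the empty product 1 with |Aut| = 1. -/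
lemma aux_prodfact (e : ℕ) (s : Multiset ℕ) :
    (∏ j ∈ (e ::ₘ s).toFinset, ((e ::ₘ s).count j).factorial : ℕ)
      = (s.count e + 1) * ∏ j ∈ s.toFinset, (s.count j).factorial := by
  by_cases he : e ∈ s.toFinset
  · have hfin : (e ::ₘ s).toFinset = s.toFinset := by
      simp [Multiset.toFinset_cons, Finset.insert_eq_self.2 he]
    rw [hfin, ← Finset.prod_erase_mul _ _ he, ← Finset.prod_erase_mul _ _ he]
    have h1 : ∀ j ∈ s.toFinset.erase e, ((e ::ₘ s).count j).factorial = (s.count j).factorial := by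
      intro j hj
      rw [Multiset.count_cons_of_ne (Finset.ne_of_mem_erase hj)]
    rw [Finset.prod_congr rfl h1, Multiset.count_cons_self, Nat.factorial_succ]
    ring
  · have hce : s.count e = 0 := by simpa using he
    rw [Multiset.toFinset_cons, Finset.prod_insert he]
    have h1 : ∀ j ∈ s.toFinset, ((e ::ₘ s).count j).factorial = (s.count j).factorial := by
      intro j hj
      rw [Multiset.count_cons_of_ne]
      rintro rfl; exact he hj
    rw [Finset.prod_congr rfl h1, Multiset.count_cons_self, hce]
    simp [Nat.factorial]

/-- Reindexing identity: summing over partitions `ν ⊢ d` with a distinguished part `e`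
(counted with multiplicity) the weight `(1/|Aut ν|)·e²·∏ νᵢ^{νᵢ-1}/νᵢ!·f(l(ν),e)`
equals summing over `e` and partitions `μ ⊢ d-e` the weight
`(e^{e+1}/e!)·(1/|Aut μ|)·∏ μᵢ^{μᵢ-1}/μᵢ!·f(l(μ)+1,e)`. -/
theorem stmt_7 (d : ℕ) (hd : 0 < d) (f : ℕ → ℕ → ℚ) :
    ∑ ν : d.Partition, ∑ e ∈ ν.parts.toFinset,
      (ν.parts.count e : ℚ) *
        (1 / ((∏ j ∈ ν.parts.toFinset, (ν.parts.count j).factorial : ℕ) : ℚ)) *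
        (e : ℚ) ^ 2 * (ν.parts.map (fun r : ℕ => (r : ℚ) ^ (r - 1) / (r.factorial : ℚ))).prod *
        f ν.parts.card e
    = ∑ e ∈ Finset.Icc 1 d, ((e : ℚ) ^ (e + 1) / (e.factorial : ℚ)) *
        ∑ μ : (d - e).Partition,
          (1 / ((∏ j ∈ μ.parts.toFinset, (μ.parts.count j).factorial : ℕ) : ℚ)) *
          (μ.parts.map (fun r : ℕ => (r : ℚ) ^ (r - 1) / (r.factorial : ℚ))).prod *
          f (μ.parts.card + 1) e := by
  -- extend inner sum to Icc 1 d
  have hstep : ∀ ν : d.Partition,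
      (∑ e ∈ ν.parts.toFinset,
        (ν.parts.count e : ℚ) *
          (1 / ((∏ j ∈ ν.parts.toFinset, (ν.parts.count j).factorial : ℕ) : ℚ)) *
          (e : ℚ) ^ 2 * (ν.parts.map (fun r : ℕ => (r : ℚ) ^ (r - 1) / (r.factorial : ℚ))).prod *
          f ν.parts.card e)
      = ∑ e ∈ Finset.Icc 1 d,
        (ν.parts.count e : ℚ) *
          (1 / ((∏ j ∈ ν.parts.toFinset, (ν.parts.count j).factorial : ℕ) : ℚ)) *
          (e : ℚ) ^ 2 * (ν.parts.map (fun r : ℕ => (r : ℚ) ^ (r - 1) / (r.factorial : ℚ))).prod *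
          f ν.parts.card e := by
    intro ν
    refine Finset.sum_subset ?_ ?_
    · intro j hj
      rw [Multiset.mem_toFinset] at hj
      refine Finset.mem_Icc.2 ⟨ν.parts_pos hj, ?_⟩
      calc j ≤ ν.parts.sum := Multiset.le_sum_of_mem hj  -- might not exist
        _ = d := ν.parts_sum
    · intro e _ he
      rw [Multiset.mem_toFinset] at he
      rw [Multiset.count_eq_zero_of_notMem he]
      simp
  rw [Finset.sum_congr rfl fun ν _ => hstep ν, Finset.sum_comm]
  refine Finset.sum_congr rfl fun e he => ?_
  rw [Finset.mul_sum]
  obtain ⟨he1, he2⟩ := Finset.mem_Icc.1 he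
  -- restrict to ν containing e
  classical
  rw [← Finset.sum_filter_add_sum_filter_not Finset.univ (fun ν : d.Partition => e ∈ ν.parts)]
  have h0 : ∑ ν ∈ Finset.univ.filter (fun ν : d.Partition => ¬ e ∈ ν.parts),
      (ν.parts.count e : ℚ) *
        (1 / ((∏ j ∈ ν.parts.toFinset, (ν.parts.count j).factorial : ℕ) : ℚ)) *
        (e : ℚ) ^ 2 * (ν.parts.map (fun r : ℕ => (r : ℚ) ^ (r - 1) / (r.factorial : ℚ))).prod *
        f ν.parts.card e = 0 := by
    refine Finset.sum_eq_zero fun ν hν => ?_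
    rw [Finset.mem_filter] at hν
    rw [Multiset.count_eq_zero_of_notMem hν.2]
    simp
  rw [h0, add_zero]
  refine Finset.sum_bij' (fun ν hν => (⟨ν.parts.erase e, ?_, ?_⟩ : (d - e).Partition))
    (fun μ _ => (⟨e ::ₘ μ.parts, ?_, ?_⟩ : d.Partition)) ?_ ?_ ?_ ?_ ?_
  · intro i hi; exact ν.parts_pos (Multiset.mem_of_mem_erase hi)
  · -- erase sum
    have h : e ∈ ν.parts := (Finset.mem_filter.1 hν).2
    have h2 : (e ::ₘ ν.parts.erase e).sum = d := by rw [Multiset.cons_erase h, ν.parts_sum]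
    rw [Multiset.sum_cons] at h2; omega
  · -- cons pos
    intro i hi
    rcases Multiset.mem_cons.1 hi with rfl | hi
    · exact he1
    · exact μ.parts_pos hi
  · -- cons sum
    rw [Multiset.sum_cons, μ.parts_sum]; omega
  · intro ν hν; exact Finset.mem_univ _
  · intro μ hμ
    refine Finset.mem_filter.2 ⟨Finset.mem_univ _, ?_⟩
    exact Multiset.mem_cons_self _ _
  · intro ν hν
    have h : e ∈ ν.parts := (Finset.mem_filter.1 hν).2
    exact Nat.Partition.ext (Multiset.cons_erase h)
  · intro μ hμ
    exact Nat.Partition.ext (Multiset.erase_cons_head _ _)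
  · intro ν hν
    have h : e ∈ ν.parts := (Finset.mem_filter.1 hν).2
    have hs : ν.parts = e ::ₘ ν.parts.erase e := (Multiset.cons_erase h).symm
    set t := ν.parts.erase e with ht
    simp only []
    rw [hs]
    rw [aux_prodfact, Multiset.count_cons_self, Multiset.map_cons, Multiset.prod_cons,
      Multiset.card_cons, Multiset.erase_cons_head, Nat.cast_mul, Nat.cast_add, Nat.cast_one]
    have hP : ((∏ j ∈ t.toFinset, (t.count j).factorial : ℕ) : ℚ) ≠ 0 := by
      rw [Nat.cast_ne_zero]
      exact Finset.prod_ne_zero_iff.2 fun j _ => (Nat.factorial_pos _).ne'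
    have hpow : (e : ℚ) ^ 2 * (e : ℚ) ^ (e - 1) = (e : ℚ) ^ (e + 1) := by
      rw [← pow_add]; congr 1; omega
    have hfac : ((e.factorial : ℕ) : ℚ) ≠ 0 := Nat.cast_ne_zero.2 (Nat.factorial_pos _).ne'
    have hc : ((t.count e : ℚ) + 1) ≠ 0 := by positivity
    have key : ((t.count e : ℚ) + 1) *
        (1 / (((t.count e : ℚ) + 1) * ((∏ j ∈ t.toFinset, (t.count j).factorial : ℕ) : ℚ)))
        = 1 / ((∏ j ∈ t.toFinset, (t.count j).factorial : ℕ) : ℚ) := by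
      rw [one_div, mul_inv, ← mul_assoc, mul_inv_cancel₀ hc, one_mul, one_div]
    rw [key, ← hpow]
    ring
end
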